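/- Let k ≥ 2 and let T_k be the complete tripartite graph K_{a,b,c} with a = 2^k+1, b = 2^{k-1}(2^k+1), c = 2^{k-1}(2^k−1). The distance signless Laplacian matrix of T_k has eigenvalues: 2^{2k} + 2^{k+1} − 2 with multiplicity 2^k; 3·2^{2k-1} + 3·2^{k-1} − 3 with multiplicity b − 1; 3·2^{2k-1} + 2^{k-1} − 3 with multiplicity c − 1; together with the three eigenvalues of the 3×3 matrix 𝔇_P whose rows are [2^{2k}+2^{k+1}−2+2(2^k+1), b, c], [a, 3·2^{2k-1}+3·2^{k-1}−3+2^k(2^k+1), c], and [a, b, 3·2^{2k-1}+2^{k-1}−3+2^k(2^k−1)], each with multiplicity 1. -/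

import Mathlib

open Polynomial

/-- The part of a vertex of `Fin a ⊕ Fin b ⊕ Fin c`. -/
def tripart {a b c : ℕ} : Fin a ⊕ Fin b ⊕ Fin c → Fin 3
  | Sum.inl _ => 0
  | Sum.inr (Sum.inl _) => 1
  | Sum.inr (Sum.inr _) => 2

/-- The complete tripartite graph `K_{a,b,c}`. -/
def completeTripartiteGraph (a b c : ℕ) : SimpleGraph (Fin a ⊕ Fin b ⊕ Fin c) where
  Adj u v := tripart u ≠ tripart v
  symm := ⟨fun _ _ h => h.symm⟩
  loopless := ⟨fun _ h => h rfl⟩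

/-- The distance matrix of a graph. -/
noncomputable def distMatrix {V : Type*} [Fintype V] (G : SimpleGraph V) : Matrix V V ℝ :=
  Matrix.of fun u v => (G.dist u v : ℝ)

/-- The diagonal matrix of transmissions (sums of distances to all other vertices). -/
noncomputable def transMatrix {V : Type*} [Fintype V] [DecidableEq V] (G : SimpleGraph V) :
    Matrix V V ℝ :=
  Matrix.diagonal fun v => ∑ u, (G.dist v u : ℝ)

/-- The distance signless Laplacian matrix `D^Q = Tr + D`. -/
noncomputable def distSignlessLapMatrix {V : Type*} [Fintype V] [DecidableEq V]
    (G : SimpleGraph V) : Matrix V V ℝ :=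
  transMatrix G + distMatrix G

/-- The co-centralizer graph of `PSL(2, 2^k)`:
the complete tripartite graph `K_{2^k+1, 2^{k-1}(2^k+1), 2^{k-1}(2^k-1)}`. -/
def pslGraph (k : ℕ) :=
  completeTripartiteGraph (2 ^ k + 1) (2 ^ (k - 1) * (2 ^ k + 1)) (2 ^ (k - 1) * (2 ^ k - 1))

/-- The `3 × 3` quotient matrix `𝔇_P` describing the remaining three distance signless
Laplacian eigenvalues. -/
noncomputable def DP (k : ℕ) : Matrix (Fin 3) (Fin 3) ℝ :=
  !![(2 : ℝ) ^ (2 * k) + 2 ^ (k + 1) - 2 + 2 * (2 ^ k + 1),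
      2 ^ (k - 1) * (2 ^ k + 1), 2 ^ (k - 1) * (2 ^ k - 1);
    (2 : ℝ) ^ k + 1,
      3 * 2 ^ (2 * k - 1) + 3 * 2 ^ (k - 1) - 3 + 2 ^ k * (2 ^ k + 1),
      2 ^ (k - 1) * (2 ^ k - 1);
    (2 : ℝ) ^ k + 1, 2 ^ (k - 1) * (2 ^ k + 1),
      3 * 2 ^ (2 * k - 1) + 2 ^ (k - 1) - 3 + 2 ^ k * (2 ^ k - 1)]


namespace TriAux

variable {A B C : ℕ}

abbrev Vt (A B C : ℕ) := Fin (A+1) ⊕ Fin (B+1) ⊕ Fin (C+1)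

noncomputable def szR (A B C : ℕ) : Fin 3 → ℝ := ![(A:ℝ)+1, (B:ℝ)+1, (C:ℝ)+1]
noncomputable def nR (A B C : ℕ) : ℝ := (A:ℝ)+B+C+3
noncomputable def lamR (A B C : ℕ) (p : Fin 3) : ℝ := nR A B C + szR A B C p - 4
noncomputable def DPg (A B C : ℕ) : Matrix (Fin 3) (Fin 3) ℝ :=
  fun p q => if p = q then nR A B C + 3 * szR A B C p - 4 else szR A B C q

lemma exists_other (p : Fin 3) : ∃ w : Vt A B C, tripart w ≠ p := by
  by_cases h : p = 0
  · exact ⟨Sum.inr (Sum.inl 0), by simp [tripart, h]⟩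
  · exact ⟨Sum.inl 0, by simp [tripart]; exact fun hh => h hh.symm⟩

lemma dist_eq (u v : Vt A B C) :
    (completeTripartiteGraph (A+1) (B+1) (C+1)).dist u v =
      if u = v then 0 else if tripart u = tripart v then 2 else 1 := by
  set G := completeTripartiteGraph (A+1) (B+1) (C+1) with hG
  split_ifs with h1 h2
  · subst h1; exact SimpleGraph.dist_self
  · obtain ⟨w, hw⟩ := exists_other (A := A) (B := B) (C := C) (tripart u)
    have hadj1 : G.Adj u w := show tripart u ≠ tripart w from fun hh => hw hh.symm
    have hadj2 : G.Adj w v := show tripart w ≠ tripart v from fun hh => hw (hh.trans h2.symm)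
    have hle : G.dist u v ≤ 2 := by
      simpa using SimpleGraph.dist_le
        (SimpleGraph.Walk.cons hadj1 (SimpleGraph.Walk.cons hadj2 SimpleGraph.Walk.nil))
    have hne0 : G.dist u v ≠ 0 := by
      rw [Ne, SimpleGraph.dist_eq_zero_iff_eq_or_not_reachable]
      push_neg
      exact ⟨h1, ⟨SimpleGraph.Walk.cons hadj1 (SimpleGraph.Walk.cons hadj2 SimpleGraph.Walk.nil)⟩⟩
    have hne1 : G.dist u v ≠ 1 := by
      rw [Ne, SimpleGraph.dist_eq_one_iff_adj]
      intro hadj; exact (show tripart u ≠ tripart v from hadj) h2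
    omega
  · exact SimpleGraph.dist_eq_one_iff_adj.mpr (show G.Adj u v from h2)

lemma card_part (p : Fin 3) :
    ∑ u : Vt A B C, (if p = tripart u then (1:ℝ) else 0) = szR A B C p := by
  rw [Fintype.sum_sum_type]
  simp only [Fintype.sum_sum_type]
  fin_cases p <;>
    simp [tripart, szR, Finset.sum_const, Finset.card_univ]

lemma transmission (v : Vt A B C) :
    ∑ u, ((completeTripartiteGraph (A+1) (B+1) (C+1)).dist v u : ℝ) =
      nR A B C + szR A B C (tripart v) - 2 := by
  have h1 : ∀ u : Vt A B C, ((completeTripartiteGraph (A+1) (B+1) (C+1)).dist v u : ℝ) =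
      ((if tripart v = tripart u then (2:ℝ) else 1) - (if v = u then 2 else 0)) := by
    intro u
    rw [dist_eq]
    by_cases h : v = u
    · subst h; simp
    · by_cases h2 : tripart v = tripart u <;> simp [h, h2]
  simp only [h1]
  rw [Finset.sum_sub_distrib]
  have h2 : ∀ u : Vt A B C, (if tripart v = tripart u then (2:ℝ) else 1) =
      1 + (if tripart v = tripart u then (1:ℝ) else 0) := by
    intro u; split_ifs <;> norm_num
  simp only [h2]
  rw [Finset.sum_add_distrib, card_part]
  have h3 : ∑ u : Vt A B C, (if v = u then (2:ℝ) else 0) = 2 := by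
    rw [Finset.sum_ite_eq]; simp
  rw [h3]
  have h4 : ∑ _u : Vt A B C, (1:ℝ) = (A:ℝ)+B+C+3 := by
    simp [Finset.sum_const, Finset.card_univ]
    ring
  rw [h4, nR]

lemma M_apply (u v : Vt A B C) :
    distSignlessLapMatrix (completeTripartiteGraph (A+1) (B+1) (C+1)) u v =
      if u = v then nR A B C + szR A B C (tripart u) - 2
      else if tripart u = tripart v then 2 else 1 := by
  unfold distSignlessLapMatrix transMatrix distMatrix
  rw [Matrix.add_apply]
  by_cases h : u = v
  · subst h
    rw [Matrix.diagonal_apply_eq, transmission]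
    simp [dist_eq]
  · rw [Matrix.diagonal_apply_ne _ h]
    simp only [Matrix.of_apply, dist_eq, h, if_false, zero_add]
    by_cases h2 : tripart u = tripart v <;> simp [h2]


noncomputable def Pblk (m : ℕ) : Matrix (Fin (m+1)) (Fin (m+1)) ℝ :=
  fun r j => if j = 0 then 1 else if r = j then 1 else if r = 0 then -1 else 0

noncomputable def Qblk (m : ℕ) : Matrix (Fin (m+1)) (Fin (m+1)) ℝ :=
  fun j r => if j = 0 then ((m:ℝ)+1)⁻¹ else (if r = j then 1 else 0) - ((m:ℝ)+1)⁻¹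

lemma Pblk_mul_Qblk (m : ℕ) : Pblk m * Qblk m = 1 := by
  have hm : ((m:ℝ)+1) ≠ 0 := by positivity
  have hQ0 : ∀ s, Qblk m 0 s = ((m:ℝ)+1)⁻¹ := fun s => by simp [Qblk]
  have hQs : ∀ (j : Fin m) (s : Fin (m+1)),
      Qblk m j.succ s = (if s = j.succ then (1:ℝ) else 0) - ((m:ℝ)+1)⁻¹ := by
    intro j s; simp [Qblk, Fin.succ_ne_zero]
  have hP0 : ∀ r, Pblk m r 0 = (1:ℝ) := fun r => by simp [Pblk]
  have hP0succ : ∀ j : Fin m, Pblk m 0 j.succ = -1 := by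
    intro j; simp [Pblk, Fin.succ_ne_zero, (Fin.succ_ne_zero j).symm]
  have hPsucc : ∀ (i j : Fin m), Pblk m i.succ j.succ = if i = j then (1:ℝ) else 0 := by
    intro i j; simp [Pblk, Fin.succ_ne_zero, Fin.succ_inj]
  have hzs : ∀ j : Fin m, ((0:Fin (m+1)) = j.succ) = False := by
    intro j; simp [(Fin.succ_ne_zero j).symm]
  ext r s
  rw [Matrix.mul_apply, Fin.sum_univ_succ, Matrix.one_apply]
  rcases Fin.eq_zero_or_eq_succ r with rfl | ⟨i, rfl⟩ <;>
    rcases Fin.eq_zero_or_eq_succ s with rfl | ⟨l, rfl⟩ <;>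
    simp [hP0, hQ0, hP0succ, hQs, hPsucc, hzs, Fin.succ_inj, mul_sub, ite_mul, sub_mul,
      zero_mul, mul_zero, Finset.sum_sub_distrib, Finset.sum_add_distrib,
      Finset.sum_const, Finset.card_univ, Finset.sum_ite_eq,
      Finset.sum_ite_eq', (Fin.succ_ne_zero _).symm, Fin.succ_ne_zero] <;>
    (try field_simp) <;>
    (try simp [ite_mul, zero_mul, Finset.sum_add_distrib, Finset.sum_ite_eq, Finset.sum_const,
      Finset.card_univ, mul_comm]) <;>
    (try field_simp) <;>
    (try ring)


lemma Qblk_mul_Pblk (m : ℕ) : Qblk m * Pblk m = 1 :=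
  mul_eq_one_comm.mp (Pblk_mul_Qblk m)

noncomputable def PmM (A B C : ℕ) : Matrix (Vt A B C) (Vt A B C) ℝ :=
  Matrix.fromBlocks (Pblk A) 0 0 (Matrix.fromBlocks (Pblk B) 0 0 (Pblk C))

noncomputable def QmM (A B C : ℕ) : Matrix (Vt A B C) (Vt A B C) ℝ :=
  Matrix.fromBlocks (Qblk A) 0 0 (Matrix.fromBlocks (Qblk B) 0 0 (Qblk C))

lemma Pm_mul_Qm : PmM A B C * QmM A B C = 1 := by
  simp [PmM, QmM, Matrix.fromBlocks_multiply, Pblk_mul_Qblk, ← Matrix.fromBlocks_one]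

lemma Qm_mul_Pm : QmM A B C * PmM A B C = 1 :=
  mul_eq_one_comm.mp Pm_mul_Qm

noncomputable def Tm (A B C : ℕ) : Matrix (Vt A B C) (Vt A B C) ℝ := fun v w =>
  match v, w with
  | .inl r, .inl j =>
      if j = 0 then (if r = 0 then DPg A B C 0 0 else 0)
      else (if r = j then lamR A B C 0 else 0)
  | .inl r, .inr (.inl j) => if j = 0 ∧ r = 0 then DPg A B C 0 1 else 0
  | .inl r, .inr (.inr j) => if j = 0 ∧ r = 0 then DPg A B C 0 2 else 0
  | .inr (.inl r), .inl j => if j = 0 ∧ r = 0 then DPg A B C 1 0 else 0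
  | .inr (.inl r), .inr (.inl j) =>
      if j = 0 then (if r = 0 then DPg A B C 1 1 else 0)
      else (if r = j then lamR A B C 1 else 0)
  | .inr (.inl r), .inr (.inr j) => if j = 0 ∧ r = 0 then DPg A B C 1 2 else 0
  | .inr (.inr r), .inl j => if j = 0 ∧ r = 0 then DPg A B C 2 0 else 0
  | .inr (.inr r), .inr (.inl j) => if j = 0 ∧ r = 0 then DPg A B C 2 1 else 0
  | .inr (.inr r), .inr (.inr j) =>
      if j = 0 then (if r = 0 then DPg A B C 2 2 else 0)
      else (if r = j then lamR A B C 2 else 0)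

lemma sum_ite_diag (m : ℕ) (s : Fin (m+1)) (x y : ℝ) :
    (∑ r : Fin (m+1), if s = r then x else y) = x + y * m := by
  have : ∀ r : Fin (m+1), (if s = r then x else y) = y + (if s = r then x - y else 0) := by
    intro r; split_ifs <;> ring
  simp only [this]
  rw [Finset.sum_add_distrib, Finset.sum_ite_eq, Finset.sum_const]
  simp [Finset.card_univ, mul_comm]
  ring

lemma sum_mul_Pblk_zero (m : ℕ) (f : Fin (m+1) → ℝ) :
    ∑ r, f r * Pblk m r 0 = ∑ r, f r := by
  simp [Pblk]

lemma sum_mul_Pblk_succ (m : ℕ) (i : Fin m) (f : Fin (m+1) → ℝ) :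
    ∑ r, f r * Pblk m r i.succ = f i.succ - f 0 := by
  have : ∀ r : Fin (m+1), Pblk m r i.succ =
      (if r = i.succ then (1:ℝ) else 0) - (if r = 0 then 1 else 0) := by
    intro r
    rcases Fin.eq_zero_or_eq_succ r with rfl | ⟨l, rfl⟩
    · simp [Pblk, Fin.succ_ne_zero, (Fin.succ_ne_zero i).symm]
    · simp [Pblk, Fin.succ_ne_zero, Fin.succ_inj]
  simp only [this, mul_sub, mul_ite, mul_one, mul_zero]
  rw [Finset.sum_sub_distrib, Finset.sum_ite_eq', Finset.sum_ite_eq']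
  simp

lemma Pblk_zero (m : ℕ) (r : Fin (m+1)) : Pblk m r 0 = 1 := by simp [Pblk]

lemma Pblk_succ (m : ℕ) (r : Fin (m+1)) (i : Fin m) :
    Pblk m r i.succ = (if r = i.succ then (1:ℝ) else 0) - (if r = 0 then 1 else 0) := by
  rcases Fin.eq_zero_or_eq_succ r with rfl | ⟨l, rfl⟩
  · simp [Pblk, Fin.succ_ne_zero, (Fin.succ_ne_zero i).symm]
  · simp [Pblk, Fin.succ_ne_zero, Fin.succ_inj]

lemma Lrow_head_diag (m : ℕ) (x : ℝ) (s : Fin (m+1)) :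
    ∑ r, (if s = r then x else 2) * Pblk m r 0 = x + 2*m := by
  simp only [Pblk_zero, mul_one]; exact sum_ite_diag m s x 2

lemma Lrow_head_diag' (m : ℕ) (x : ℝ) (s : Fin (m+1)) :
    ∑ r : Fin (m+1), (if s = r then x * Pblk m r 0 else 2 * Pblk m r 0) = x + 2*m := by
  simp only [Pblk_zero, mul_one]; exact sum_ite_diag m s x 2

lemma Lrow_head_one (m : ℕ) : ∑ r : Fin (m+1), (1:ℝ) * Pblk m r 0 = m + 1 := by
  simp [Pblk_zero]

lemma Lrow_succ_diag (m : ℕ) (x : ℝ) (s : Fin (m+1)) (i : Fin m) :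
    ∑ r, (if s = r then x else 2) * Pblk m r i.succ =
      (if s = i.succ then x else 2) - (if s = 0 then x else 2) :=
  sum_mul_Pblk_succ m i _

lemma Lrow_succ_diag' (m : ℕ) (x : ℝ) (s : Fin (m+1)) (i : Fin m) :
    ∑ r : Fin (m+1), (if s = r then x * Pblk m r i.succ else 2 * Pblk m r i.succ) =
      (if s = i.succ then x else 2) - (if s = 0 then x else 2) := by
  rw [← Lrow_succ_diag m x s i]
  exact Finset.sum_congr rfl fun r _ => by split_ifs <;> ring

lemma Lrow_succ_one (m : ℕ) (i : Fin m) : ∑ r : Fin (m+1), (1:ℝ) * Pblk m r i.succ = 0 := by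
  have := sum_mul_Pblk_succ m i (fun _ => (1:ℝ))
  simpa using this

lemma Lcol_head (m : ℕ) (s : Fin (m+1)) (d : ℝ) :
    ∑ r, Pblk m s r * (if r = 0 then d else 0) = d := by
  simp only [mul_ite, mul_zero, Finset.sum_ite_eq', Finset.mem_univ, if_true, Pblk_zero, one_mul]

lemma Lcol_head' (m : ℕ) (s : Fin (m+1)) (d : ℝ) :
    ∑ r : Fin (m+1), (if r = 0 then Pblk m s r * d else 0) = d := by
  rw [Finset.sum_ite_eq']; simp [Pblk_zero]

lemma Lcol_succ (m : ℕ) (s : Fin (m+1)) (i : Fin m) (d : ℝ) :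
    ∑ r, Pblk m s r * (if r = i.succ then d else 0) = Pblk m s i.succ * d := by
  simp only [mul_ite, mul_zero, Finset.sum_ite_eq', Finset.mem_univ, if_true]

lemma Lcol_succ' (m : ℕ) (s : Fin (m+1)) (i : Fin m) (d : ℝ) :
    ∑ r : Fin (m+1), (if r = i.succ then Pblk m s r * d else 0) = Pblk m s i.succ * d := by
  rw [Finset.sum_ite_eq']; simp

lemma zero_ne_succ' (m : ℕ) (i : Fin m) : (0 : Fin (m+1)) ≠ i.succ :=
  (Fin.succ_ne_zero i).symm

lemma sum_pm (m : ℕ) (i : Fin m) :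
    (∑ x : Fin (m+1), if x = i.succ then (1:ℝ) else if x = 0 then -1 else 0) = 0 := by
  have h : ∀ x : Fin (m+1), (if x = i.succ then (1:ℝ) else if x = 0 then -1 else 0) =
      (if x = i.succ then (1:ℝ) else 0) - (if x = 0 then 1 else 0) := by
    intro x; rcases Fin.eq_zero_or_eq_succ x with rfl | ⟨l, rfl⟩
    · simp [(Fin.succ_ne_zero i).symm]
    · simp [Fin.succ_inj, Fin.succ_ne_zero]
  simp only [h, Finset.sum_sub_distrib, Finset.sum_ite_eq']
  simp

set_option maxHeartbeats 1600000 in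
lemma MP_eq_PT :
    distSignlessLapMatrix (completeTripartiteGraph (A+1) (B+1) (C+1)) * PmM A B C =
      PmM A B C * Tm A B C := by
  ext u w
  rw [Matrix.mul_apply, Matrix.mul_apply, Fintype.sum_sum_type, Fintype.sum_sum_type]
  rcases w with j | j | j <;>
    rcases Fin.eq_zero_or_eq_succ j with rfl | ⟨i, rfl⟩ <;>
    rcases u with s | s | s <;>
    simp [M_apply, PmM, Tm, tripart, Fin.succ_ne_zero,
      Lrow_head_diag, Lrow_head_diag', Lrow_head_one, Lrow_succ_diag, Lrow_succ_diag',
      Lrow_succ_one, Lcol_head, Lcol_head', Lcol_succ, Lcol_succ',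
      Finset.sum_const, Finset.card_univ] <;>
    (try norm_num [nR, szR, DPg, lamR, Pblk, sum_pm, Fin.succ_ne_zero,
      (show ((1:Fin 3) ≠ 0) by decide), (show ((2:Fin 3) ≠ 0) by decide),
      (show ((0:Fin 3) ≠ 1) by decide), (show ((2:Fin 3) ≠ 1) by decide),
      (show ((0:Fin 3) ≠ 2) by decide), (show ((1:Fin 3) ≠ 2) by decide)]) <;>
    (try split_ifs) <;>
    (try simp_all [Fin.succ_ne_zero, zero_ne_succ']) <;>
    (try norm_num) <;>
    (try ring)

lemma charpoly_conj {n : Type*} [Fintype n] [DecidableEq n] (M P Q T : Matrix n n ℝ)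
    (hPQ : P * Q = 1) (h : M * P = P * T) : M.charpoly = T.charpoly := by
  have hM : M = P * T * Q := by
    calc M = M * (P * Q) := by rw [hPQ, mul_one]
    _ = (M * P) * Q := by rw [mul_assoc]
    _ = P * T * Q := by rw [h]
  set Cring : ℝ →+* ℝ[X] := Polynomial.C with hC
  have h1 : (P.map Cring) * (Q.map Cring) = 1 := by
    rw [← Matrix.map_mul, hPQ, Matrix.map_one _ (map_zero Cring) (map_one Cring)]
  have hcomm : ∀ (Y : Matrix n n ℝ[X]), Matrix.scalar n (X : ℝ[X]) * Y =
      Y * Matrix.scalar n (X : ℝ[X]) := by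
    intro Y
    exact (Matrix.scalar_commute (X : ℝ[X]) (fun r => Commute.all _ _) Y)
  have key : M.charmatrix = (P.map Cring) * T.charmatrix * (Q.map Cring) := by
    have : M.charmatrix = Matrix.scalar n (X : ℝ[X]) - M.map Cring := rfl
    rw [this, hM, Matrix.map_mul, Matrix.map_mul]
    have hscal : Matrix.scalar n (X : ℝ[X]) =
        (P.map Cring) * Matrix.scalar n (X : ℝ[X]) * (Q.map Cring) := by
      rw [mul_assoc, hcomm, ← mul_assoc, h1, one_mul]
    calc Matrix.scalar n (X : ℝ[X]) - P.map Cring * T.map Cring * Q.map Cring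
        = (P.map Cring) * Matrix.scalar n (X : ℝ[X]) * (Q.map Cring) -
            P.map Cring * T.map Cring * Q.map Cring := by rw [← hscal]
      _ = (P.map Cring) * (Matrix.scalar n (X : ℝ[X]) - T.map Cring) * (Q.map Cring) := by
          noncomm_ring
      _ = (P.map Cring) * T.charmatrix * (Q.map Cring) := rfl
  rw [Matrix.charpoly, Matrix.charpoly, key, Matrix.det_mul, Matrix.det_mul]
  have : (P.map Cring).det * (Q.map Cring).det = 1 := by
    rw [← Matrix.det_mul, h1, Matrix.det_one]
  calc (P.map Cring).det * T.charmatrix.det * (Q.map Cring).det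
      = T.charmatrix.det * ((P.map Cring).det * (Q.map Cring).det) := by ring
    _ = T.charmatrix.det := by rw [this, mul_one]

def eV (A B C : ℕ) : Vt A B C ≃ (Fin A ⊕ Fin B ⊕ Fin C) ⊕ Fin 3 where
  toFun v := match v with
    | .inl r => Fin.cases (Sum.inr 0) (fun i => Sum.inl (Sum.inl i)) r
    | .inr (.inl r) => Fin.cases (Sum.inr 1) (fun i => Sum.inl (Sum.inr (Sum.inl i))) r
    | .inr (.inr r) => Fin.cases (Sum.inr 2) (fun i => Sum.inl (Sum.inr (Sum.inr i))) r
  invFun w := match w with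
    | .inl (.inl i) => .inl i.succ
    | .inl (.inr (.inl i)) => .inr (.inl i.succ)
    | .inl (.inr (.inr i)) => .inr (.inr i.succ)
    | .inr p => if p = 0 then .inl 0 else if p = 1 then .inr (.inl 0) else .inr (.inr 0)
  left_inv v := by
    rcases v with r | r | r <;>
      (rcases Fin.eq_zero_or_eq_succ r with rfl | ⟨i, rfl⟩ <;> simp)
  right_inv w := by
    rcases w with (i | i | i) | p
    · simp
    · simp
    · simp
    · fin_cases p <;> simp

noncomputable def ddiag (A B C : ℕ) : (Fin A ⊕ Fin B ⊕ Fin C) → ℝ :=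
  Sum.elim (fun _ => lamR A B C 0) (Sum.elim (fun _ => lamR A B C 1) (fun _ => lamR A B C 2))

noncomputable def Nblk (A B C : ℕ) :
    Matrix ((Fin A ⊕ Fin B ⊕ Fin C) ⊕ Fin 3) ((Fin A ⊕ Fin B ⊕ Fin C) ⊕ Fin 3) ℝ :=
  Matrix.fromBlocks (Matrix.diagonal (ddiag A B C)) 0 0 (DPg A B C)

lemma T_reindex : Tm A B C =
    (Matrix.reindex (eV A B C).symm (eV A B C).symm) (Nblk A B C) := by
  ext v w
  rw [Matrix.reindex_apply]
  simp only [Equiv.symm_symm, Matrix.submatrix_apply]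
  rcases v with r | r | r <;> rcases w with j | j | j <;>
    rcases Fin.eq_zero_or_eq_succ r with rfl | ⟨i, rfl⟩ <;>
    rcases Fin.eq_zero_or_eq_succ j with rfl | ⟨l, rfl⟩ <;>
    simp [Tm, eV, Nblk, ddiag, Matrix.diagonal_apply, Fin.succ_ne_zero, zero_ne_succ',
      Fin.succ_inj]

lemma charpoly_diag {n : Type*} [Fintype n] [DecidableEq n] (d : n → ℝ) :
    (Matrix.diagonal d).charpoly = ∏ i, (X - Polynomial.C (d i)) := by
  rw [Matrix.charpoly]
  have h : (Matrix.diagonal d).charmatrix =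
      Matrix.diagonal (fun i => (X : ℝ[X]) - C (d i)) := by
    ext i j
    by_cases h : i = j
    · subst h; rw [Matrix.charmatrix_apply_eq, Matrix.diagonal_apply_eq, Matrix.diagonal_apply_eq]
    · rw [Matrix.charmatrix_apply_ne _ _ _ h, Matrix.diagonal_apply_ne _ h,
        Matrix.diagonal_apply_ne _ h, map_zero, neg_zero]
  rw [h, Matrix.det_diagonal]

theorem charpoly_tri (A B C : ℕ) :
    (distSignlessLapMatrix (completeTripartiteGraph (A+1) (B+1) (C+1))).charpoly =
      (X - Polynomial.C (lamR A B C 0))^A * (X - Polynomial.C (lamR A B C 1))^B * (X - Polynomial.C (lamR A B C 2))^C *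
        (DPg A B C).charpoly := by
  rw [charpoly_conj _ (PmM A B C) (QmM A B C) (Tm A B C) Pm_mul_Qm MP_eq_PT]
  rw [T_reindex, Matrix.charpoly_reindex, Nblk, Matrix.charpoly_fromBlocks_zero₂₁,
    charpoly_diag]
  rw [Fintype.prod_sum_type, Fintype.prod_sum_type]
  simp [ddiag, Finset.prod_const, Finset.card_univ, mul_assoc]

end TriAux

namespace TriAux2

lemma eval_charpoly_fin3 (M : Matrix (Fin 3) (Fin 3) ℝ) (x : ℝ) :
    M.charpoly.eval x =
      (x - M 0 0) * (x - M 1 1) * (x - M 2 2) - (x - M 0 0) * M 1 2 * M 2 1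
      - M 0 1 * M 1 0 * (x - M 2 2) - M 0 1 * M 1 2 * M 2 0
      - M 0 2 * M 1 0 * M 2 1 - M 0 2 * (x - M 1 1) * M 2 0 := by
  have h := RingHom.map_det (Polynomial.evalRingHom x) M.charmatrix
  have h2 : M.charpoly.eval x = (M.charmatrix.map (Polynomial.evalRingHom x)).det := by
    rw [Matrix.charpoly]
    exact h
  have h3 : ∀ i j, (M.charmatrix.map (Polynomial.evalRingHom x)) i j =
      (if i = j then x else 0) - M i j := by
    intro i j
    by_cases hij : i = j
    · subst hij
      simp [Matrix.charmatrix_apply_eq]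
    · simp [Matrix.charmatrix_apply_ne _ _ _ hij, hij]
  rw [h2, Matrix.det_fin_three]
  simp only [h3]
  norm_num [Fin.ext_iff]
  ring

lemma rm_pow (a x : ℝ) (n : ℕ) :
    ((X - Polynomial.C a) ^ n).rootMultiplicity x = if x = a then n else 0 := by
  split_ifs with h
  · subst h; exact rootMultiplicity_X_sub_C_pow x n
  · apply rootMultiplicity_eq_zero
    simp [Polynomial.IsRoot, sub_eq_zero, h]

lemma rm_mul4 (p1 p2 p3 p4 : ℝ[X]) (h1 : p1 ≠ 0) (h2 : p2 ≠ 0) (h3 : p3 ≠ 0) (h4 : p4 ≠ 0)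
    (x : ℝ) : (p1 * p2 * p3 * p4).rootMultiplicity x =
      p1.rootMultiplicity x + p2.rootMultiplicity x + p3.rootMultiplicity x +
        p4.rootMultiplicity x := by
  rw [rootMultiplicity_mul (mul_ne_zero (mul_ne_zero (mul_ne_zero h1 h2) h3) h4),
    rootMultiplicity_mul (mul_ne_zero (mul_ne_zero h1 h2) h3),
    rootMultiplicity_mul (mul_ne_zero h1 h2)]

lemma cubic_factor (q : ℝ[X]) (hm : q.Monic) (hdeg : q.natDegree = 3) {m1 m2 m3 : ℝ}
    (h12 : m1 ≠ m2) (h13 : m1 ≠ m3) (h23 : m2 ≠ m3)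
    (e1 : q.IsRoot m1) (e2 : q.IsRoot m2) (e3 : q.IsRoot m3) :
    q = (X - Polynomial.C m1) * (X - Polynomial.C m2) * (X - Polynomial.C m3) := by
  obtain ⟨q1, hq1⟩ := (dvd_iff_isRoot).2 e1
  have hr2 : q1.IsRoot m2 := by
    have h : (m2 - m1) * q1.eval m2 = 0 := by
      have h := e2
      rw [hq1] at h
      simpa only [Polynomial.IsRoot, eval_mul, eval_sub, eval_X, eval_C] using h
    exact (mul_eq_zero.mp h).resolve_left (sub_ne_zero.mpr (Ne.symm h12))
  obtain ⟨q2, hq2⟩ := (dvd_iff_isRoot).2 hr2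
  have hr3 : q2.IsRoot m3 := by
    have h : (m3 - m1) * ((m3 - m2) * q2.eval m3) = 0 := by
      have h := e3
      rw [hq1, hq2] at h
      simpa only [Polynomial.IsRoot, eval_mul, eval_sub, eval_X, eval_C, mul_assoc] using h
    exact ((mul_eq_zero.mp ((mul_eq_zero.mp h).resolve_left
      (sub_ne_zero.mpr (Ne.symm h13)))).resolve_left (sub_ne_zero.mpr (Ne.symm h23)))
  obtain ⟨q3, hq3⟩ := (dvd_iff_isRoot).2 hr3
  have hq : q = (X - Polynomial.C m1) * (X - Polynomial.C m2) * (X - Polynomial.C m3) * q3 := by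
    rw [hq1, hq2, hq3]; ring
  have hqne : q ≠ 0 := hm.ne_zero
  have hq3ne : q3 ≠ 0 := by
    intro h; rw [h, mul_zero] at hq; exact hqne hq
  have hXm : ∀ m : ℝ, (X - Polynomial.C m) ≠ (0 : ℝ[X]) := fun m => X_sub_C_ne_zero m
  have hdeg3 : q3.natDegree = 0 := by
    have := hdeg
    rw [hq, natDegree_mul (mul_ne_zero (mul_ne_zero (hXm m1) (hXm m2)) (hXm m3)) hq3ne,
      natDegree_mul (mul_ne_zero (hXm m1) (hXm m2)) (hXm m3),
      natDegree_mul (hXm m1) (hXm m2), natDegree_X_sub_C, natDegree_X_sub_C,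
      natDegree_X_sub_C] at this
    omega
  have hlc : q3.leadingCoeff = 1 := by
    have h := hm
    unfold Polynomial.Monic at h
    rw [hq, leadingCoeff_mul, leadingCoeff_mul, leadingCoeff_mul, leadingCoeff_X_sub_C,
      leadingCoeff_X_sub_C, leadingCoeff_X_sub_C] at h
    simpa using h
  have : q3 = 1 := by
    rw [eq_C_of_natDegree_eq_zero hdeg3]
    rw [eq_C_of_natDegree_eq_zero hdeg3] at hlc
    simp only [leadingCoeff_C] at hlc
    rw [hlc, map_one]
  rw [hq, this, mul_one]

end TriAux2


open TriAux TriAux2 in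
set_option maxHeartbeats 3200000 in
theorem psl_cocentralizer_distance_signless_laplacian_spectrum (k : ℕ) (hk : 2 ≤ k) :
    (distSignlessLapMatrix (pslGraph k)).charpoly.rootMultiplicity
      ((2 : ℝ) ^ (2 * k) + 2 ^ (k + 1) - 2) = 2 ^ k ∧
    (distSignlessLapMatrix (pslGraph k)).charpoly.rootMultiplicity
      (3 * (2 : ℝ) ^ (2 * k - 1) + 3 * 2 ^ (k - 1) - 3) = 2 ^ (k - 1) * (2 ^ k + 1) - 1 ∧
    (distSignlessLapMatrix (pslGraph k)).charpoly.rootMultiplicity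
      (3 * (2 : ℝ) ^ (2 * k - 1) + 2 ^ (k - 1) - 3) = 2 ^ (k - 1) * (2 ^ k - 1) - 1 ∧
    (distSignlessLapMatrix (pslGraph k)).charpoly =
      (X - C ((2 : ℝ) ^ (2 * k) + 2 ^ (k + 1) - 2)) ^ (2 ^ k) *
        (X - C (3 * (2 : ℝ) ^ (2 * k - 1) + 3 * 2 ^ (k - 1) - 3)) ^
          (2 ^ (k - 1) * (2 ^ k + 1) - 1) *
        (X - C (3 * (2 : ℝ) ^ (2 * k - 1) + 2 ^ (k - 1) - 3)) ^
          (2 ^ (k - 1) * (2 ^ k - 1) - 1) *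
        (DP k).charpoly ∧
    ∀ μ : ℝ, (DP k).charpoly.IsRoot μ →
      (distSignlessLapMatrix (pslGraph k)).charpoly.rootMultiplicity μ = 1 := by
  classical
  -- natural number bookkeeping
  have hp1 : 0 < 2^(k-1) := by positivity
  have hp2 : 4 ≤ 2^k := by calc (4:ℕ) = 2^2 := by norm_num
                                _ ≤ 2^k := Nat.pow_le_pow_right (by norm_num) hk
  set Bn := 2^(k-1)*(2^k+1) - 1 with hBn
  set Cn := 2^(k-1)*(2^k-1) - 1 with hCn
  have hB : 2^(k-1)*(2^k+1) = Bn + 1 := by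
    have h := Nat.mul_pos hp1 (show 0 < 2^k+1 by omega)
    omega
  have hC : 2^(k-1)*(2^k-1) = Cn + 1 := by
    have h := Nat.mul_pos hp1 (show 0 < 2^k-1 by omega)
    omega
  -- real constant s = 2^(k-1)
  obtain ⟨s, hs2, hs24, hsk, hks, hkk, hk21, hkp⟩ :
      ∃ s : ℝ, 2 ≤ s ∧ (s = 2 ∨ 4 ≤ s) ∧ (2:ℝ)^(k-1) = s ∧ (2:ℝ)^k = 2*s ∧
        (2:ℝ)^(2*k) = 4*s^2 ∧ (2:ℝ)^(2*k-1) = 2*s^2 ∧ (2:ℝ)^(k+1) = 4*s := by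
    refine ⟨2^(k-1), ?_, ?_, rfl, ?_, ?_, ?_, ?_⟩
    · calc (2:ℝ) = 2^1 := by norm_num
      _ ≤ 2^(k-1) := pow_le_pow_right₀ one_le_two (by omega)
    · rcases Nat.lt_or_ge k 3 with h | h
      · left
        have hk2 : k = 2 := by omega
        subst hk2
        norm_num
      · right
        calc (4:ℝ) = 2^2 := by norm_num
        _ ≤ 2^(k-1) := pow_le_pow_right₀ one_le_two (by omega)
    · conv_lhs => rw [show k = (k-1)+1 by omega]
      rw [pow_succ]
      ring
    · rw [show 2*k = (k-1)+(k-1)+2 by omega, pow_add, pow_add]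
      ring
    · rw [show 2*k-1 = (k-1)+(k-1)+1 by omega, pow_add, pow_add]
      ring
    · rw [show k+1 = (k-1)+2 by omega, pow_add]
      ring
  -- casts of the part sizes
  have hBr : (Bn:ℝ) = 2*s^2 + s - 1 := by
    have h1 : ((Bn + 1 : ℕ):ℝ) = ((2^(k-1)*(2^k+1) : ℕ):ℝ) := by rw [hB]
    push_cast at h1
    rw [hks, hsk] at h1
    linarith
  have hCr : (Cn:ℝ) = 2*s^2 - s - 1 := by
    have h1 : ((Cn + 1 : ℕ):ℝ) = ((2^(k-1)*(2^k-1) : ℕ):ℝ) := by rw [hC]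
    rw [Nat.cast_mul, Nat.cast_sub (show 1 ≤ 2^k by omega)] at h1
    push_cast at h1
    rw [hks, hsk] at h1
    linarith
  -- eigenvalue conversions
  have hlam0 : TriAux.lamR (2^k) Bn Cn 0 = (2:ℝ)^(2*k) + 2^(k+1) - 2 := by
    simp only [TriAux.lamR, TriAux.nR, TriAux.szR, Matrix.cons_val_zero]
    push_cast
    rw [hBr, hCr, hkk, hkp, hks]
    ring
  have hlam1 : TriAux.lamR (2^k) Bn Cn 1 = 3*(2:ℝ)^(2*k-1) + 3*2^(k-1) - 3 := by
    simp only [TriAux.lamR, TriAux.nR, TriAux.szR, Matrix.cons_val_one, Matrix.head_cons]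
    push_cast
    rw [hBr, hCr, hk21, hks, hsk]
    ring
  have hlam2 : TriAux.lamR (2^k) Bn Cn 2 = 3*(2:ℝ)^(2*k-1) + 2^(k-1) - 3 := by
    have h2 : TriAux.szR (2^k) Bn Cn 2 = (Cn:ℝ)+1 := rfl
    simp only [TriAux.lamR, TriAux.nR, h2]
    push_cast
    rw [hBr, hCr, hk21, hks, hsk]
    ring
  have hDPg : TriAux.DPg (2^k) Bn Cn = DP k := by
    have h0 : TriAux.szR (2^k) Bn Cn 0 = ((2^k : ℕ):ℝ)+1 := rfl
    have h1 : TriAux.szR (2^k) Bn Cn 1 = (Bn:ℝ)+1 := rfl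
    have h2 : TriAux.szR (2^k) Bn Cn 2 = (Cn:ℝ)+1 := rfl
    ext p q
    fin_cases p <;> fin_cases q <;>
      simp [TriAux.DPg, TriAux.nR, TriAux.szR, DP, Fin.ext_iff, Matrix.vecHead, Matrix.vecTail] <;>
      push_cast <;>
      simp only [hBr, hCr, hkk, hk21, hkp, hks, hsk] <;>
      ring
  -- the factorization
  have hfact : (distSignlessLapMatrix (pslGraph k)).charpoly =
      (X - C ((2:ℝ)^(2*k) + 2^(k+1) - 2))^(2^k) *
      (X - C (3*(2:ℝ)^(2*k-1) + 3*2^(k-1) - 3))^Bn *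
      (X - C (3*(2:ℝ)^(2*k-1) + 2^(k-1) - 3))^Cn * (DP k).charpoly := by
    have h0 : pslGraph k =
        completeTripartiteGraph (2^k+1) (2^(k-1)*(2^k+1)) (2^(k-1)*(2^k-1)) := rfl
    rw [h0, hB, hC, TriAux.charpoly_tri (2^k) Bn Cn, hlam0, hlam1, hlam2, hDPg]
  set L1 : ℝ := (2:ℝ)^(2*k) + 2^(k+1) - 2 with hL1
  set L2 : ℝ := 3*(2:ℝ)^(2*k-1) + 3*2^(k-1) - 3 with hL2
  set L3 : ℝ := 3*(2:ℝ)^(2*k-1) + 2^(k-1) - 3 with hL3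
  have hL1s : L1 = 4*s^2+4*s-2 := by rw [hL1, hkk, hkp]; try ring
  have hL2s : L2 = 6*s^2+3*s-3 := by rw [hL2, hk21, hsk]; try ring
  have hL3s : L3 = 6*s^2+s-3 := by rw [hL3, hk21, hsk]; try ring
  -- facts about the cubic q
  set q := (DP k).charpoly with hqdef
  have hqm : q.Monic := (DP k).charpoly_monic
  have hqne : q ≠ 0 := hqm.ne_zero
  have hqdeg : q.natDegree = 3 := by
    rw [hqdef, Matrix.charpoly_natDegree_eq_dim]
    simp
  have hM : DP k = !![4*s^2+8*s, 2*s^2+s, 2*s^2-s;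
                      2*s+1, 10*s^2+5*s-3, 2*s^2-s;
                      2*s+1, 2*s^2+s, 10*s^2-s-3] := by
    ext p q'
    fin_cases p <;> fin_cases q' <;>
      simp [DP, Fin.ext_iff, Matrix.vecHead, Matrix.vecTail] <;>
      simp only [hkk, hk21, hkp, hks, hsk] <;> ring
  have hqev : ∀ x : ℝ, q.eval x =
      (x - (4*s^2+8*s)) * (x - (10*s^2+5*s-3)) * (x - (10*s^2-s-3))
      - (x - (4*s^2+8*s)) * (2*s^2-s) * (2*s^2+s)
      - (2*s^2+s) * (2*s+1) * (x - (10*s^2-s-3))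
      - (2*s^2+s) * (2*s^2-s) * (2*s+1)
      - (2*s^2-s) * (2*s+1) * (2*s^2+s)
      - (2*s^2-s) * (x - (10*s^2+5*s-3)) * (2*s+1) := by
    intro x
    rw [hqdef, hM, TriAux2.eval_charpoly_fin3]
    norm_num [Matrix.vecHead, Matrix.vecTail]
    simp [Matrix.cons_val_two, Matrix.vecHead, Matrix.vecTail]
  have hs0 : (0:ℝ) < s := by linarith
  have hw5 : 0 ≤ (s-2)*s^5 := mul_nonneg (by linarith) (by positivity)
  have hw4 : 0 ≤ (s-2)*s^4 := mul_nonneg (by linarith) (by positivity)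
  have hw3 : 0 ≤ (s-2)*s^3 := mul_nonneg (by linarith) (by positivity)
  have hw2 : 0 ≤ (s-2)*s^2 := mul_nonneg (by linarith) (by positivity)
  have hw1 : 0 ≤ (s-2)*s := mul_nonneg (by linarith) hs0.le
  -- evaluations at the three eigenvalue candidates are nonzero
  have hqL1 : q.eval L1 ≠ 0 := by
    have h : q.eval L1 = -96*s^5+32*s^4+88*s^3+8*s^2-12*s-2 := by rw [hL1s, hqev]; ring
    rw [h]
    nlinarith [hw5, hw4, hw3, hw2, hw1, hs0]
  have hqL2 : q.eval L2 ≠ 0 := by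
    have h : q.eval L2 = 24*s^6-60*s^5-10*s^4+47*s^3+17*s^2 := by rw [hL2s, hqev]; ring
    rw [h]
    rcases hs24 with rfl | h4
    · norm_num
    · have hw6 : 0 ≤ (s-4)*s^5 := mul_nonneg (by linarith) (by positivity)
      have hw6' : 0 ≤ (s-4)*s^4 := mul_nonneg (by linarith) (by positivity)
      have hw6'' : 0 ≤ (s-4)*s^3 := mul_nonneg (by linarith) (by positivity)
      nlinarith [hw6, hw6', hw6'', hs0]
  have hqL3 : q.eval L3 ≠ 0 := by
    have h : q.eval L3 = 24*s^6-52*s^5-90*s^4+21*s^3+17*s^2 := by rw [hL3s, hqev]; ring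
    rw [h]
    rcases hs24 with rfl | h4
    · norm_num
    · have hw6 : 0 ≤ (s-4)*s^5 := mul_nonneg (by linarith) (by positivity)
      have hw6' : 0 ≤ (s-4)*s^4 := mul_nonneg (by linarith) (by positivity)
      have hw6'' : 0 ≤ (s-4)*s^3 := mul_nonneg (by linarith) (by positivity)
      nlinarith [hw6, hw6', hw6'', hs0]
  -- sign changes locating three distinct roots
  have sign1 : q.eval (4*s^2+6*s-1) < 0 := by
    have h : q.eval (4*s^2+6*s-1) = -32*s^5+48*s^4+40*s^3-28*s^2-24*s-4 := by
      rw [hqev]; ring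
    rw [h]
    rcases hs24 with rfl | h4
    · norm_num
    · have hw6 : 0 ≤ (s-4)*s^4 := mul_nonneg (by linarith) (by positivity)
      have hw6' : 0 ≤ (s-4)*s^3 := mul_nonneg (by linarith) (by positivity)
      nlinarith [hw6, hw6', hs0, hw2, hw1]
  have sign2 : 0 < q.eval (8*s^2-3) := by
    have h : q.eval (8*s^2-3) = 32*s^5-64*s^4+8*s^3+8*s^2 := by rw [hqev]; ring
    rw [h]
    nlinarith [hw4, hs0, pow_pos hs0 3, pow_pos hs0 2]
  have sign3 : q.eval (8*s^2+4*s-3) < 0 := by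
    have h : q.eval (8*s^2+4*s-3) = -32*s^5+24*s^3+8*s^2 := by rw [hqev]; ring
    rw [h]
    nlinarith [hw3, hw2, hs0, pow_pos hs0 3, pow_pos hs0 2, pow_pos hs0 5, hw5]
  have sign4 : 0 < q.eval (16*s^2) := by
    have h : q.eval (16*s^2) = 384*s^6-608*s^5+560*s^4-424*s^3+188*s^2-72*s := by
      rw [hqev]; ring
    rw [h]
    nlinarith [hw5, hw4, hw3, hw2, hw1, hs0]
  have hr12 : 4*s^2+6*s-1 < 8*s^2-3 := by nlinarith [hw1, hs0]
  have hr23 : 8*s^2-3 < 8*s^2+4*s-3 := by nlinarith [hs0]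
  have hr34 : 8*s^2+4*s-3 < 16*s^2 := by nlinarith [hw1, hs0]
  have hcont : ∀ a b : ℝ, ContinuousOn (fun x => q.eval x) (Set.Icc a b) :=
    fun a b => q.continuous.continuousOn
  obtain ⟨m1, hm1I, hm1⟩ : ∃ m ∈ Set.Ioo (4*s^2+6*s-1) (8*s^2-3), q.eval m = 0 := by
    obtain ⟨m, hmI, hm⟩ := intermediate_value_Ioo hr12.le (hcont _ _) ⟨sign1, sign2⟩
    exact ⟨m, hmI, hm⟩
  obtain ⟨m2, hm2I, hm2⟩ : ∃ m ∈ Set.Ioo (8*s^2-3) (8*s^2+4*s-3), q.eval m = 0 := by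
    obtain ⟨m, hmI, hm⟩ := intermediate_value_Ioo' hr23.le (hcont _ _) ⟨sign3, sign2⟩
    exact ⟨m, hmI, hm⟩
  obtain ⟨m3, hm3I, hm3⟩ : ∃ m ∈ Set.Ioo (8*s^2+4*s-3) (16*s^2), q.eval m = 0 := by
    obtain ⟨m, hmI, hm⟩ := intermediate_value_Ioo hr34.le (hcont _ _) ⟨sign3, sign4⟩
    exact ⟨m, hmI, hm⟩
  have h12 : m1 < m2 := lt_trans hm1I.2 hm2I.1
  have h23 : m2 < m3 := lt_trans hm2I.2 hm3I.1
  have h13 : m1 < m3 := lt_trans h12 h23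
  have hfq : q = (X - Polynomial.C m1) * (X - Polynomial.C m2) * (X - Polynomial.C m3) :=
    TriAux2.cubic_factor q hqm hqdeg h12.ne h13.ne h23.ne hm1 hm2 hm3
  -- root multiplicity bookkeeping
  have hne1 : (X - Polynomial.C L1)^(2^k) ≠ (0:ℝ[X]) :=
    pow_ne_zero _ (Polynomial.X_sub_C_ne_zero _)
  have hne2 : (X - Polynomial.C L2)^Bn ≠ (0:ℝ[X]) :=
    pow_ne_zero _ (Polynomial.X_sub_C_ne_zero _)
  have hne3 : (X - Polynomial.C L3)^Cn ≠ (0:ℝ[X]) :=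
    pow_ne_zero _ (Polynomial.X_sub_C_ne_zero _)
  have hrm : ∀ x : ℝ, (distSignlessLapMatrix (pslGraph k)).charpoly.rootMultiplicity x =
      ((X - Polynomial.C L1)^(2^k)).rootMultiplicity x +
      ((X - Polynomial.C L2)^Bn).rootMultiplicity x +
      ((X - Polynomial.C L3)^Cn).rootMultiplicity x + q.rootMultiplicity x := by
    intro x
    rw [hfact]
    exact TriAux2.rm_mul4 _ _ _ _ hne1 hne2 hne3 hqne x
  have hL12 : L1 ≠ L2 := by rw [hL1s, hL2s]; intro h; nlinarith [hw1, hs0]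
  have hL13 : L1 ≠ L3 := by rw [hL1s, hL3s]; intro h; nlinarith [hw1, hs0]
  have hL23 : L2 ≠ L3 := by rw [hL2s, hL3s]; intro h; nlinarith [hs0]
  refine ⟨?_, ?_, ?_, hfact, ?_⟩
  · rw [hrm, TriAux2.rm_pow, TriAux2.rm_pow, TriAux2.rm_pow, if_pos rfl, if_neg hL12,
      if_neg hL13, rootMultiplicity_eq_zero hqL1]
    omega
  · rw [hrm, TriAux2.rm_pow, TriAux2.rm_pow, TriAux2.rm_pow, if_pos rfl, if_neg hL12.symm,
      if_neg hL23, rootMultiplicity_eq_zero hqL2]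
    omega
  · rw [hrm, TriAux2.rm_pow, TriAux2.rm_pow, TriAux2.rm_pow, if_pos rfl, if_neg hL13.symm,
      if_neg hL23.symm, rootMultiplicity_eq_zero hqL3]
    omega
  · intro m hm
    have hme : q.eval m = 0 := hm
    have hmL1 : m ≠ L1 := fun h => hqL1 (h ▸ hme)
    have hmL2 : m ≠ L2 := fun h => hqL2 (h ▸ hme)
    have hmL3 : m ≠ L3 := fun h => hqL3 (h ▸ hme)
    have hq1 : q.rootMultiplicity m = 1 := by
      have hprod : (m - m1) * (m - m2) * (m - m3) = 0 := by
        have := hme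
        rw [hfq] at this
        simpa using this
      rw [hfq, rootMultiplicity_mul (mul_ne_zero
          (mul_ne_zero (Polynomial.X_sub_C_ne_zero m1) (Polynomial.X_sub_C_ne_zero m2))
          (Polynomial.X_sub_C_ne_zero m3)),
        rootMultiplicity_mul (mul_ne_zero (Polynomial.X_sub_C_ne_zero m1)
          (Polynomial.X_sub_C_ne_zero m2)),
        rootMultiplicity_X_sub_C, rootMultiplicity_X_sub_C, rootMultiplicity_X_sub_C]
      rcases mul_eq_zero.mp hprod with h | h
      · rcases mul_eq_zero.mp h with h' | h'
        · have : m = m1 := by linarith [sub_eq_zero.mp h']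
          rw [if_pos this, if_neg (by rw [this]; exact h12.ne),
            if_neg (by rw [this]; exact h13.ne)]
        · have : m = m2 := by linarith [sub_eq_zero.mp h']
          rw [if_pos this, if_neg (by rw [this]; exact h12.ne'),
            if_neg (by rw [this]; exact h23.ne)]
      · have : m = m3 := by linarith [sub_eq_zero.mp h]
        rw [if_pos this, if_neg (by rw [this]; exact h13.ne'),
          if_neg (by rw [this]; exact h23.ne')]
    rw [hrm, TriAux2.rm_pow, TriAux2.rm_pow, TriAux2.rm_pow, if_neg hmL1, if_neg hmL2,
      if_neg hmL3, hq1]
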